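/- Assume f = h + g with h ∈ S_{μ,L}^{1,1}(X) (0 ≤ μ ≤ L < ∞) and g convex on X. Let (λ_k, x_k, y_k, v_k) be generated by the corrected semi-implicit scheme with x₀, v₀ ∈ X: y_k = (x_k + α_k v_k)/(1+α_k); v_{k+1} = argmin_{v ∈ X} { g(v) + ⟨Aᵀλ_{k+1} + ∇h_β(y_k), v⟩ + (τ_k/(2α_k))‖v − w_k‖² } where τ_k = γ_k + μ_β α_k and w_k = (γ_k v_k + μ_β α_k y_k)/τ_k; x_{k+1} = (x_k + α_k v_{k+1})/(1+α_k); λ_{k+1} = λ_k + (α_k/θ_k)(A v_{k+1} − b); θ_{k+1} = θ_k/(1+α_k), γ_{k+1} = (γ_k + μ_β α_k)/(1+α_k), θ₀ = 1, γ₀ > 0, and L_β α_k² = γ_k. With E_k = L_β(x_k, λ*) − L_β(x*, λ_k) + (γ_k/2)‖v_k − x*‖² + (θ_k/2)‖λ_k − λ*‖² and R₀ = √(2E₀) + ‖λ₀ − λ*‖ + ‖Ax₀ − b‖, for all k: ‖Ax_k − b‖ ≤ θ_k R₀; 0 ≤ L(x_k, λ*) − L(x*, λ_k) ≤ θ_k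 E₀; and |f(x_k) − f(x*)| ≤ θ_k(E₀ + R₀‖λ*‖), where L(x,λ) = f(x) + δ_X(x) + ⟨λ, Ax − b⟩. -/

import Mathlib

open scoped RealInnerProductSpace Pointwise

section AuxLemmas

variable {E F : Type*} [NormedAddCommGroup E] [InnerProductSpace ℝ E]
  [NormedAddCommGroup F] [InnerProductSpace ℝ F]

lemma combo_sq' (a c : E) (t : ℝ) :
    ‖(1-t)•a + t•c‖^2 = (1-t)*‖a‖^2 + t*‖c‖^2 - t*(1-t)*‖a-c‖^2 := by
  simp only [← real_inner_self_eq_norm_sq]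
  simp only [inner_add_left, inner_add_right, inner_sub_left, inner_sub_right,
    inner_smul_left, inner_smul_right, starRingEnd_apply, star_trivial]
  rw [real_inner_comm c a]; ring

lemma norm_add_sq'' (a c : E) : ‖a + c‖^2 = ‖a‖^2 + 2*⟪a,c⟫ + ‖c‖^2 := by
  simp only [← real_inner_self_eq_norm_sq]
  simp only [inner_add_left, inner_add_right]
  rw [real_inner_comm c a]; ring

lemma polar_id' (a c d : F) : 2*⟪a-c, c-d⟫ = ‖a-d‖^2 - ‖a-c‖^2 - ‖c-d‖^2 := by
  have : a - d = (a-c) + (c-d) := by abel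
  rw [this, norm_add_sq'']; ring

lemma three_pt' {γ σ : ℝ} (hγ : 0 < γ) (hσ : 0 ≤ σ) (v y w p : E)
    (hw : (γ+σ)•w = γ•v + σ•y) :
    (γ+σ)*‖p-w‖^2 = γ*‖p-v‖^2 + σ*‖p-y‖^2 - (γ*σ/(γ+σ))*‖v-y‖^2 := by
  have hτ : 0 < γ + σ := by linarith
  set t := σ/(γ+σ) with ht
  have e2 : (γ+σ)*t = σ := by rw [ht, mul_div_cancel₀ _ (ne_of_gt hτ)]
  have e1 : (γ+σ)*(1-t) = γ := by rw [mul_sub, mul_one, e2]; ring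
  have key : (γ+σ)•(p-w) = (γ+σ)•((1-t)•(p-v) + t•(p-y)) := by
    rw [smul_add, smul_smul, smul_smul, e1, e2, smul_sub γ, smul_sub σ, smul_sub, hw, add_smul]
    abel
  have hwc : p - w = (1-t)•(p-v) + t•(p-y) :=
    smul_right_injective E (ne_of_gt hτ) key
  rw [hwc, combo_sq']
  have h3 : (p-v)-(p-y) = y - v := by abel
  rw [h3, norm_sub_rev y v, ht]
  field_simp
  ring

lemma combo_rep {α : ℝ} (hα : 0 < α) {z a c : E} (hz : (1+α)•z = a + α•c) :
    z = (1/(1+α))•a + (α/(1+α))•c := by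
  have h1 : (0:ℝ) < 1 + α := by linarith
  refine smul_right_injective E (ne_of_gt h1) ?_
  show (1 + α) • z = (1 + α) • ((1/(1+α))•a + (α/(1+α))•c)
  rw [hz, smul_add, smul_smul, smul_smul, mul_one_div, div_self (ne_of_gt h1),
    mul_div_cancel₀ _ (ne_of_gt h1), one_smul]

lemma combo_mem {X : Set E} (hX : Convex ℝ X) {α : ℝ} (hα : 0 < α) {z a c : E}
    (hz : (1+α)•z = a + α•c) (ha : a ∈ X) (hc : c ∈ X) : z ∈ X := by
  have h1 : (0:ℝ) < 1 + α := by linarith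
  rw [combo_rep hα hz]
  exact hX ha hc (by positivity) (by positivity) (by field_simp)

variable [CompleteSpace E]

lemma descent_lemma' {X : Set E} (hX : Convex ℝ X) (h : E → ℝ) (G : E → E)
    (hg : ∀ z, HasGradientAt h (G z) z) (L : ℝ)
    (hlip : ∀ u ∈ X, ∀ w ∈ X, ⟪G u - G w, u - w⟫ ≤ L*‖u-w‖^2)
    {u w : E} (hu : u ∈ X) (hw : w ∈ X) :
    h w ≤ h u + ⟪G u, w-u⟫ + L/2*‖w-u‖^2 := by
  set d := w - u with hd
  set ψ : ℝ → ℝ := fun t => L/2*t^2*‖d‖^2 + t*⟪G u, d⟫ - h (u + t•d) with hψ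
  have hc : ∀ t : ℝ, HasDerivAt (fun s => u + s•d) d t := by
    intro t
    simpa using ((hasDerivAt_id t).smul_const d).const_add u
  have hder : ∀ t : ℝ, HasDerivAt ψ (L*t*‖d‖^2 + ⟪G u, d⟫ - ⟪G (u + t•d), d⟫) t := by
    intro t
    have h1 : HasDerivAt (fun s => h (u + s•d)) ⟪G (u + t•d), d⟫ t := by
      have := (hg (u + t•d)).hasFDerivAt.comp_hasDerivAt t (hc t)
      simp at this
      exact this
    have h2 : HasDerivAt (fun s : ℝ => L/2*s^2*‖d‖^2 + s*⟪G u, d⟫)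
        (L*t*‖d‖^2 + ⟪G u, d⟫) t := by
      have ha : HasDerivAt (fun s : ℝ => L/2*s^2*‖d‖^2) (L*t*‖d‖^2) t := by
        have := ((hasDerivAt_pow 2 t).const_mul (L/2)).mul_const (‖d‖^2)
        refine this.congr_deriv ?_
        ring
      have hb : HasDerivAt (fun s : ℝ => s*⟪G u, d⟫) ⟪G u, d⟫ t := by
        simpa using (hasDerivAt_id t).mul_const ⟪G u, d⟫
      exact ha.add hb
    exact h2.sub h1
  have hmono : MonotoneOn ψ (Set.Icc 0 1) := by
    apply monotoneOn_of_deriv_nonneg (convex_Icc 0 1)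
    · exact fun t _ => ((hder t).differentiableAt).continuousAt.continuousWithinAt
    · exact fun t _ => ((hder t).differentiableAt).differentiableWithinAt
    · intro t ht
      rw [interior_Icc] at ht
      rw [(hder t).deriv]
      have hmem : u + t•d ∈ X := by
        have : u + t•d = (1-t)•u + t•w := by
          rw [hd]; rw [smul_sub]; module
        rw [this]
        exact hX hu hw (by linarith [ht.1, ht.2]) (le_of_lt ht.1) (by linarith [ht.1, ht.2])
      have hl := hlip _ hmem _ hu
      have he : (u + t•d) - u = t•d := by abel
      rw [he] at hl
      rw [inner_smul_right, norm_smul] at hl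
      have : ⟪G (u + t•d) - G u, d⟫ ≤ L*t*‖d‖^2 := by
        have ht0 := ht.1
        rw [Real.norm_eq_abs, abs_of_pos ht0] at hl
        nlinarith [hl]
      rw [inner_sub_left] at this
      linarith
  have := hmono (Set.mem_Icc.2 ⟨le_rfl, zero_le_one⟩) (Set.mem_Icc.2 ⟨zero_le_one, le_rfl⟩) zero_le_one
  simp only [hψ] at this
  norm_num at this
  have hud : u + d = w := by rw [hd]; abel
  rw [hud] at this
  linarith [this]

lemma sc_min' {X : Set E} (hX : Convex ℝ X) (g : E → ℝ) (hg : ConvexOn ℝ Set.univ g)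
    (S w : E) (κ : ℝ) (hκ : 0 ≤ κ) (v : E) (hv : v ∈ X)
    (hmin : ∀ u ∈ X, g v + ⟪S,v⟫ + κ*‖v-w‖^2 ≤ g u + ⟪S,u⟫ + κ*‖u-w‖^2)
    {u : E} (hu : u ∈ X) :
    g v + ⟪S,v⟫ + κ*‖v-w‖^2 + κ*‖u-v‖^2 ≤ g u + ⟪S,u⟫ + κ*‖u-w‖^2 := by
  rw [show g v + ⟪S,v⟫ + κ*‖v-w‖^2 + κ*‖u-v‖^2
      = (g v + ⟪S,v⟫ + κ*‖v-w‖^2 + κ*‖u-v‖^2 - (g u + ⟪S,u⟫ + κ*‖u-w‖^2))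
        + (g u + ⟪S,u⟫ + κ*‖u-w‖^2) by ring]
  have key : ∀ ε > (0:ℝ), g v + ⟪S,v⟫ + κ*‖v-w‖^2 + κ*‖u-v‖^2
      ≤ (g u + ⟪S,u⟫ + κ*‖u-w‖^2) + ε := by
    intro ε hε
    set t : ℝ := min 1 (ε/(κ*‖u-v‖^2+1)) with htdef
    have hden : (0:ℝ) < κ*‖u-v‖^2+1 := by positivity
    have ht0 : 0 < t := lt_min one_pos (div_pos hε hden)
    have ht1 : t ≤ 1 := min_le_left _ _
    have hut : (1-t)•v + t•u ∈ X := hX hv hu (by linarith) (le_of_lt ht0) (by ring)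
    have hm := hmin _ hut
    have hgt : g ((1-t)•v + t•u) ≤ (1-t)*g v + t*g u :=
      hg.2 (Set.mem_univ v) (Set.mem_univ u) (by linarith) (le_of_lt ht0) (by ring)
    have hit : ⟪S, (1-t)•v + t•u⟫ = (1-t)*⟪S,v⟫ + t*⟪S,u⟫ := by
      rw [inner_add_right, inner_smul_right, inner_smul_right]
    have hnt : ‖((1-t)•v + t•u) - w‖^2
        = (1-t)*‖v-w‖^2 + t*‖u-w‖^2 - t*(1-t)*‖v-u‖^2 := by
      have : ((1-t)•v + t•u) - w = (1-t)•(v-w) + t•(u-w) := by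
        rw [smul_sub, smul_sub]
        rw [show (1-t)•v - (1-t)•w + (t•u - t•w) = (1-t)•v + t•u - ((1-t)•w + t•w) by abel]
        congr 1
        rw [← add_smul]
        norm_num
      rw [this, combo_sq']
      congr 2
      rw [show v - w - (u - w) = v - u by abel]
    rw [hit, hnt] at hm
    have hvu : ‖v-u‖ = ‖u-v‖ := norm_sub_rev v u
    rw [hvu] at hm
    have step : g v + ⟪S,v⟫ + κ*‖v-w‖^2 + κ*(1-t)*‖u-v‖^2 ≤ g u + ⟪S,u⟫ + κ*‖u-w‖^2 := by
      nlinarith [hm, hgt, ht0, mul_pos ht0 ht0]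
    have hts : κ*t*‖u-v‖^2 ≤ ε := by
      have h1 : t ≤ ε/(κ*‖u-v‖^2+1) := min_le_right _ _
      have h2 : κ*t*‖u-v‖^2 ≤ t*(κ*‖u-v‖^2+1) := by nlinarith [ht0]
      have h3 : t*(κ*‖u-v‖^2+1) ≤ ε := by
        rw [← div_mul_cancel₀ ε (ne_of_gt hden)]
        exact mul_le_mul_of_nonneg_right h1 (le_of_lt hden)
      linarith
    nlinarith [step, hts]
  have := le_of_forall_pos_le_add key
  linarith

end AuxLemmas

/-- The smallest singular value of a linear map between Euclidean spaces. -/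
noncomputable def sigmaMin {n m : ℕ}
    (A : EuclideanSpace ℝ (Fin n) →L[ℝ] EuclideanSpace ℝ (Fin m)) : ℝ :=
  sInf {c : ℝ | ∃ x : EuclideanSpace ℝ (Fin n), ‖x‖ = 1 ∧ ‖A x‖ = c}

lemma sigmaMin_sq_le {n m : ℕ}
    (A : EuclideanSpace ℝ (Fin n) →L[ℝ] EuclideanSpace ℝ (Fin m))
    (z : EuclideanSpace ℝ (Fin n)) :
    sigmaMin A^2 * ‖z‖^2 ≤ ‖A z‖^2 := by
  have h0 : 0 ≤ sigmaMin A :=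
    Real.sInf_nonneg (by rintro c ⟨x, -, hx⟩; rw [← hx]; positivity)
  rcases eq_or_ne z 0 with rfl | hz
  · simp
  · have hnz : (0:ℝ) < ‖z‖ := norm_pos_iff.2 hz
    have hu : ‖‖z‖⁻¹ • z‖ = 1 := by
      rw [norm_smul, Real.norm_eq_abs, abs_of_nonneg (inv_nonneg.2 hnz.le)]
      field_simp
    have hle : sigmaMin A ≤ ‖A (‖z‖⁻¹ • z)‖ :=
      csInf_le ⟨0, by rintro c ⟨x, -, hx⟩; rw [← hx]; positivity⟩ ⟨‖z‖⁻¹ • z, hu, rfl⟩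
    rw [map_smul, norm_smul, Real.norm_eq_abs, abs_of_nonneg (inv_nonneg.2 hnz.le)] at hle
    have h1 : sigmaMin A * ‖z‖ ≤ ‖A z‖ := by
      have := mul_le_mul_of_nonneg_right hle hnz.le
      calc sigmaMin A * ‖z‖ ≤ ‖z‖⁻¹ * ‖A z‖ * ‖z‖ := this
        _ = ‖A z‖ := by field_simp
    nlinarith [norm_nonneg (A z), norm_nonneg z, mul_nonneg h0 hnz.le]

/-- The convex subdifferential. -/
def subdiff {n : ℕ} (f : EuclideanSpace ℝ (Fin n) → ℝ)
    (x : EuclideanSpace ℝ (Fin n)) : Set (EuclideanSpace ℝ (Fin n)) :=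
  {p | ∀ y, f x + ⟪p, y - x⟫ ≤ f y}

/-- The normal cone of `X` at `x` (empty if `x ∉ X`). -/
def normalCone {n : ℕ} (X : Set (EuclideanSpace ℝ (Fin n)))
    (x : EuclideanSpace ℝ (Fin n)) : Set (EuclideanSpace ℝ (Fin n)) :=
  {p | x ∈ X ∧ ∀ z ∈ X, ⟪p, z - x⟫ ≤ 0}

set_option maxHeartbeats 2000000 in
/-- Theorem 5.2 (rate part): nonergodic convergence rates for the corrected semi-implicit
forward-backward scheme (5.6) with step size `L_β α_k² = γ_k`. -/
theorem corrected_semi_implicit_rates {n m : ℕ}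
    (X : Set (EuclideanSpace ℝ (Fin n)))
    (hXne : X.Nonempty) (hXcl : IsClosed X) (hXcv : Convex ℝ X)
    (h g : EuclideanSpace ℝ (Fin n) → ℝ)
    (gradh : EuclideanSpace ℝ (Fin n) → EuclideanSpace ℝ (Fin n))
    (A : EuclideanSpace ℝ (Fin n) →L[ℝ] EuclideanSpace ℝ (Fin m))
    (b : EuclideanSpace ℝ (Fin m))
    (μ L β μβ Lβc : ℝ)
    (hμ : 0 ≤ μ) (hμL : μ ≤ L) (hβ : 0 ≤ β)
    (hμβ : μβ = μ + β * sigmaMin A ^ 2)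
    (hLβc : Lβc = L + β * ‖A‖ ^ 2)
    (hgrad : ∀ z, HasGradientAt h (gradh z) z)
    (hhsc : ∀ u ∈ X, ∀ w ∈ X,
      h u + ⟪gradh u, w - u⟫ + μ / 2 * ‖w - u‖ ^ 2 ≤ h w)
    (hhlip : ∀ u ∈ X, ∀ w ∈ X, ⟪gradh u - gradh w, u - w⟫ ≤ L * ‖u - w‖ ^ 2)
    (hgcv : ConvexOn ℝ Set.univ g)
    (Lβ : EuclideanSpace ℝ (Fin n) → EuclideanSpace ℝ (Fin m) → ℝ)
    (hLβ : ∀ z w, Lβ z w = h z + β / 2 * ‖A z - b‖ ^ 2 + g z + ⟪w, A z - b⟫)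
    (xs : EuclideanSpace ℝ (Fin n)) (ls : EuclideanSpace ℝ (Fin m))
    (hxs : xs ∈ X) (hKKT1 : A xs = b)
    (hKKT2 : ∃ p ∈ subdiff (fun z => h z + g z) xs, ∃ q ∈ normalCone X xs,
      p + q + (ContinuousLinearMap.adjoint A) ls = 0)
    (θ γ α : ℕ → ℝ)
    (hα : ∀ k, 0 < α k) (hθ0 : θ 0 = 1) (hγ0 : 0 < γ 0)
    (hθ : ∀ k, θ (k + 1) = θ k / (1 + α k))
    (hγ : ∀ k, γ (k + 1) = (γ k + μβ * α k) / (1 + α k))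
    (hstep : ∀ k, Lβc * α k ^ 2 = γ k)
    (lam : ℕ → EuclideanSpace ℝ (Fin m))
    (x y v ws : ℕ → EuclideanSpace ℝ (Fin n))
    (hx0 : x 0 ∈ X) (hv0 : v 0 ∈ X)
    (hy : ∀ k, (1 + α k) • y k = x k + α k • v k)
    (hws : ∀ k, (γ k + μβ * α k) • ws k = γ k • v k + (μβ * α k) • y k)
    (hvmin : ∀ k, v (k + 1) ∈ X ∧ ∀ u ∈ X,
      g (v (k + 1)) +
        ⟪(ContinuousLinearMap.adjoint A) (lam (k + 1)) + gradh (y k)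
          + β • (ContinuousLinearMap.adjoint A) (A (y k) - b), v (k + 1)⟫ +
        (γ k + μβ * α k) / (2 * α k) * ‖v (k + 1) - ws k‖ ^ 2 ≤
      g u +
        ⟪(ContinuousLinearMap.adjoint A) (lam (k + 1)) + gradh (y k)
          + β • (ContinuousLinearMap.adjoint A) (A (y k) - b), u⟫ +
        (γ k + μβ * α k) / (2 * α k) * ‖u - ws k‖ ^ 2)
    (hx : ∀ k, (1 + α k) • x (k + 1) = x k + α k • v (k + 1))
    (hlam : ∀ k, lam (k + 1) = lam k + (α k / θ k) • (A (v (k + 1)) - b))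
    (Ef : ℕ → ℝ)
    (hEf : ∀ k, Ef k = Lβ (x k) ls - Lβ xs (lam k)
      + γ k / 2 * ‖v k - xs‖ ^ 2 + θ k / 2 * ‖lam k - ls‖ ^ 2)
    (Lag : EuclideanSpace ℝ (Fin n) → EuclideanSpace ℝ (Fin m) → ℝ)
    (hLag : ∀ z w, Lag z w = h z + g z + ⟪w, A z - b⟫)
    (R₀ : ℝ)
    (hR₀ : R₀ = Real.sqrt (2 * Ef 0) + ‖lam 0 - ls‖ + ‖A (x 0) - b‖) :
    ∀ k, ‖A (x k) - b‖ ≤ θ k * R₀ ∧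
      (0 ≤ Lag (x k) ls - Lag xs (lam k) ∧
        Lag (x k) ls - Lag xs (lam k) ≤ θ k * Ef 0) ∧
      |(h (x k) + g (x k)) - (h xs + g xs)| ≤ θ k * (Ef 0 + R₀ * ‖ls‖) := by
  have hμβ0 : 0 ≤ μβ := hμβ ▸ add_nonneg hμ (mul_nonneg hβ (sq_nonneg _))
  have hθpos : ∀ k, 0 < θ k := by
    intro k; induction k with
    | zero => rw [hθ0]; norm_num
    | succ k ih => rw [hθ k]; exact div_pos ih (by linarith [hα k])
  have hγpos : ∀ k, 0 < γ k := by
    intro k; induction k with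
    | zero => exact hγ0
    | succ k ih =>
      rw [hγ k]
      have := mul_nonneg hμβ0 (hα k).le
      exact div_pos (by linarith) (by linarith [hα k])
  -- saddle point inequality from KKT
  have hsaddle : ∀ z ∈ X, h xs + g xs ≤ h z + g z + ⟪ls, A z - b⟫ := by
    obtain ⟨p, hp, q, ⟨hqx, hq⟩, heq⟩ := hKKT2
    intro z hz
    have h1 := hp z
    simp only at h1
    have h2 := hq z hz
    have h3 : p = -q - (ContinuousLinearMap.adjoint A) ls := by
      have h4 : p + (q + (ContinuousLinearMap.adjoint A) ls) = 0 := by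
        rw [← add_assoc]; exact heq
      rw [eq_neg_of_add_eq_zero_left h4]; abel
    rw [h3, inner_sub_left, inner_neg_left, ContinuousLinearMap.adjoint_inner_left,
      map_sub, hKKT1] at h1
    have h5 : (⟪ls, A z - b⟫ : ℝ) = ⟪ls, A z - b⟫ := rfl
    rw [show A z - b = A z - b from rfl] at h1
    linarith only [h1, h2]
  -- augmented objective and its gradient
  obtain ⟨hβf, hhβf⟩ : ∃ f : EuclideanSpace ℝ (Fin n) → ℝ,
      f = fun z => h z + β/2*‖A z - b‖^2 := ⟨_, rfl⟩
  obtain ⟨Gβ, hGβ⟩ : ∃ G : EuclideanSpace ℝ (Fin n) → EuclideanSpace ℝ (Fin n),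
      G = fun z => gradh z + β • (ContinuousLinearMap.adjoint A) (A z - b) := ⟨_, rfl⟩
  -- exact expansion of the quadratic penalty
  have hquad : ∀ p q : EuclideanSpace ℝ (Fin n),
      β/2*‖A p - b‖^2 = β/2*‖A q - b‖^2 + ⟪β • (ContinuousLinearMap.adjoint A) (A q - b), p - q⟫
        + β/2*‖A (p - q)‖^2 := by
    intro p q
    have e : A p - b = (A q - b) + A (p - q) := by rw [map_sub]; abel
    rw [e, norm_add_sq'', real_inner_smul_left, ContinuousLinearMap.adjoint_inner_left]
    ring
  have hSC : ∀ p ∈ X, ∀ q ∈ X, hβf q + ⟪Gβ q, p - q⟫ + μβ/2*‖p-q‖^2 ≤ hβf p := by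
    intro p hp q hq
    have h1 := hhsc q hq p hp
    have h2 := hquad p q
    have h4 : β*(sigmaMin A^2*‖p-q‖^2) ≤ β*‖A (p-q)‖^2 :=
      mul_le_mul_of_nonneg_left (sigmaMin_sq_le A (p-q)) hβ
    simp only [hhβf, hGβ, inner_add_left]
    rw [hμβ]
    linarith only [h1, h2, h4]
  have hDL : ∀ p ∈ X, ∀ q ∈ X, hβf p ≤ hβf q + ⟪Gβ q, p - q⟫ + Lβc/2*‖p-q‖^2 := by
    intro p hp q hq
    have h1 := descent_lemma' hXcv h gradh hgrad L hhlip hq hp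
    have h2 := hquad p q
    have h4 : β*‖A (p-q)‖^2 ≤ β*(‖A‖^2*‖p-q‖^2) := by
      refine mul_le_mul_of_nonneg_left ?_ hβ
      nlinarith only [A.le_opNorm (p-q), norm_nonneg (A (p-q)), norm_nonneg (p-q),
        A.opNorm_nonneg]
    simp only [hhβf, hGβ, inner_add_left]
    rw [hLβc]
    linarith only [h1, h2, h4]
  have hLβ' : ∀ z w, Lβ z w = hβf z + g z + ⟪w, A z - b⟫ := by
    intro z w; rw [hLβ, hhβf]
  have hLβxs : ∀ w, Lβ xs w = h xs + g xs := by
    intro w; rw [hLβ, hKKT1]; simp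
  have hβfxs : hβf xs = h xs := by rw [hhβf]; simp [hKKT1]
  -- Lβc positivity
  have hL0 : 0 ≤ L := le_trans hμ hμL
  have hLβc0 : 0 ≤ Lβc := by rw [hLβc]; positivity
  -- the main invariant
  have key : ∀ k, (x k ∈ X ∧ v k ∈ X) ∧ Ef k ≤ θ k * Ef 0 ∧
      A (x k) - b = θ k • ((A (x 0) - b) + (lam k - lam 0)) := by
    intro k; induction k with
    | zero =>
      refine ⟨⟨hx0, hv0⟩, le_of_eq (by rw [hθ0]; ring), ?_⟩
      rw [hθ0, one_smul]; abel
    | succ k ih =>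
      obtain ⟨⟨hxk, hvk⟩, hEk, hfk⟩ := ih
      have ha := hα k
      have h1a : (0:ℝ) < 1 + α k := by linarith
      have hyk : y k ∈ X := combo_mem hXcv ha (hy k) hxk hvk
      have hvk1 : v (k+1) ∈ X := (hvmin k).1
      have hxk1 : x (k+1) ∈ X := combo_mem hXcv ha (hx k) hxk hvk1
      have onestep : (1 + α k) * Ef (k+1) ≤ Ef k := by
        have hgm := hγpos k
        have hth := hθpos k
        have hs0 : 0 ≤ μβ * α k := mul_nonneg hμβ0 ha.le
        have hτ : 0 < γ k + μβ * α k := by linarith only [hgm, hs0]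
        -- vector identities
        have V1 : (1 + α k) • (x (k+1) - y k) = α k • (v (k+1) - v k) := by
          rw [smul_sub, hx k, hy k, smul_sub]; abel
        have V2 : (1 + α k)^2 * ‖x (k+1) - y k‖^2 = α k^2 * ‖v (k+1) - v k‖^2 := by
          have e := congrArg (fun z => ‖z‖^2) V1
          simp only [norm_smul, Real.norm_eq_abs, abs_of_pos h1a, abs_of_pos ha,
            mul_pow] at e
          exact e
        have V3 : (1 + α k) • (x (k+1) - y k) = (x k - y k) + α k • (v (k+1) - y k) := by
          rw [smul_sub, hx k]
          module
        have S3 : (1+α k) * ⟪Gβ (y k), x (k+1) - y k⟫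
            = ⟪Gβ (y k), x k - y k⟫ + α k * ⟪Gβ (y k), v (k+1) - xs⟫
              + α k * ⟪Gβ (y k), xs - y k⟫ := by
          have e := congrArg (fun z => (⟪Gβ (y k), z⟫ : ℝ)) V3
          simp only [inner_smul_right, inner_add_right] at e
          have e2 : (⟪Gβ (y k), v (k+1) - y k⟫ : ℝ)
              = ⟪Gβ (y k), v (k+1) - xs⟫ + ⟪Gβ (y k), xs - y k⟫ := by
            rw [← inner_add_right]
            congr 1
            abel
          rw [e2] at e
          rw [e]; ring
        -- descent step
        have F1 : (1+α k) * hβf (x (k+1)) ≤ (1+α k) * hβf (y k)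
            + (1+α k)*⟪Gβ (y k), x (k+1) - y k⟫ + γ k/2 * ‖v (k+1) - v k‖^2 := by
          have hd := hDL (x (k+1)) hxk1 (y k) hyk
          have habs : (1+α k)*(Lβc/2*‖x (k+1) - y k‖^2) ≤ γ k/2 * ‖v (k+1) - v k‖^2 := by
            have hls := hstep k
            have e : (1+α k)*((1+α k)*(Lβc/2*‖x (k+1) - y k‖^2))
                = γ k/2*‖v (k+1) - v k‖^2 := by
              calc (1+α k)*((1+α k)*(Lβc/2*‖x (k+1) - y k‖^2))
                  = Lβc/2*((1+α k)^2*‖x (k+1)-y k‖^2) := by ring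
                _ = Lβc/2*(α k^2*‖v (k+1)-v k‖^2) := by rw [V2]
                _ = γ k/2*‖v (k+1)-v k‖^2 := by rw [← hls]; ring
            have hnn : 0 ≤ (1+α k)*(Lβc/2*‖x (k+1) - y k‖^2) :=
              mul_nonneg h1a.le (mul_nonneg (by linarith only [hLβc0]) (by positivity))
            nlinarith only [e, hnn, ha]
          have hd' := mul_le_mul_of_nonneg_left hd h1a.le
          linarith only [hd', habs]
        -- convexity of h_beta at x k
        have F3 : hβf (y k) + ⟪Gβ (y k), x k - y k⟫ ≤ hβf (x k) := by
          have hc := hSC (x k) hxk (y k) hyk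
          have hnn : 0 ≤ μβ/2*‖x k - y k‖^2 :=
            mul_nonneg (by linarith only [hμβ0]) (by positivity)
          linarith only [hc, hnn]
        -- strong convexity at xs
        have F4 : α k * hβf (y k) + α k * ⟪Gβ (y k), xs - y k⟫
            + (μβ*α k)/2*‖xs - y k‖^2 ≤ α k * h xs := by
          have hc := hSC xs hxs (y k) hyk
          rw [hβfxs] at hc
          have hc' := mul_le_mul_of_nonneg_left hc ha.le
          nlinarith only [hc']
        -- convexity of g
        have F5 : (1+α k) * g (x (k+1)) ≤ g (x k) + α k * g (v (k+1)) := by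
          have hrep := combo_rep ha (hx k)
          have hcv := hgcv.2 (Set.mem_univ (x k)) (Set.mem_univ (v (k+1)))
            (by positivity : (0:ℝ) ≤ 1/(1+α k)) (by positivity : (0:ℝ) ≤ α k/(1+α k))
            (by field_simp)
          rw [← hrep] at hcv
          have hcv' := mul_le_mul_of_nonneg_left hcv h1a.le
          simp only [smul_eq_mul] at hcv'
          have e : (1+α k)*(1/(1+α k)*g (x k) + α k/(1+α k)*g (v (k+1)))
              = g (x k) + α k*g (v (k+1)) := by field_simp; try ring
          linarith only [hcv', e]
        -- optimality of v (k+1)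
        obtain ⟨S, hS⟩ : ∃ s, s = (ContinuousLinearMap.adjoint A) (lam (k + 1)) + gradh (y k)
          + β • (ContinuousLinearMap.adjoint A) (A (y k) - b) := ⟨_, rfl⟩
        have F6 : α k * g (v (k+1)) + α k * ⟪Gβ (y k), v (k+1) - xs⟫
            + α k * ⟪lam (k+1), A (v (k+1)) - b⟫
            + (γ k + μβ*α k)/2*‖v (k+1) - ws k‖^2 + (γ k + μβ*α k)/2*‖xs - v (k+1)‖^2
            ≤ α k * g xs + (γ k + μβ*α k)/2*‖xs - ws k‖^2 := by
          have hκ : 0 ≤ (γ k + μβ * α k)/(2*α k) :=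
            div_nonneg hτ.le (by linarith only [ha])
          have hminS := (hvmin k).2
          rw [← hS] at hminS
          have hopt := sc_min' hXcv g hgcv S (ws k) ((γ k + μβ * α k)/(2*α k)) hκ
            (v (k+1)) hvk1 hminS hxs
          have hSG : S = (ContinuousLinearMap.adjoint A) (lam (k+1)) + Gβ (y k) := by
            rw [hS]
            simp only [hGβ]
            abel
          have hi : (⟪S, v (k+1)⟫ : ℝ) - ⟪S, xs⟫
              = ⟪Gβ (y k), v (k+1) - xs⟫ + ⟪lam (k+1), A (v (k+1)) - b⟫ := by
            rw [← inner_sub_right, hSG, inner_add_left,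
              ContinuousLinearMap.adjoint_inner_left, map_sub, hKKT1]
            ring
          have hmul := mul_le_mul_of_nonneg_left hopt ha.le
          have hane : α k ≠ 0 := ha.ne'
          have c1 : α k * ((γ k + μβ * α k)/(2*α k)*‖v (k+1) - ws k‖^2)
              = (γ k + μβ*α k)/2*‖v (k+1) - ws k‖^2 := by field_simp; try ring
          have c2 : α k * ((γ k + μβ * α k)/(2*α k)*‖xs - v (k+1)‖^2)
              = (γ k + μβ*α k)/2*‖xs - v (k+1)‖^2 := by field_simp; try ring
          have c3 : α k * ((γ k + μβ * α k)/(2*α k)*‖xs - ws k‖^2)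
              = (γ k + μβ*α k)/2*‖xs - ws k‖^2 := by field_simp; try ring
          have hi' := congrArg (fun r => α k * r) hi
          simp only [mul_sub] at hi'
          linarith only [hmul, c1, c2, c3, hi']
        -- three-point identities
        have F7 := three_pt' hgm hs0 (v k) (y k) (ws k) xs (hws k)
        have F8 := three_pt' hgm hs0 (v k) (y k) (ws k) (v (k+1)) (hws k)
        -- lambda identity
        have F9 : α k * ⟪ls, A (v (k+1)) - b⟫ - α k * ⟪lam (k+1), A (v (k+1)) - b⟫
            ≤ θ k/2*‖lam k - ls‖^2 - θ k/2*‖lam (k+1) - ls‖^2 := by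
          have hAv : A (v (k+1)) - b = (θ k/α k) • (lam (k+1) - lam k) := by
            rw [hlam k, add_sub_cancel_left, smul_smul,
              show θ k/α k * (α k/θ k) = 1 by field_simp, one_smul]
          have hpol := polar_id' ls (lam (k+1)) (lam k)
          have e1 : α k * ⟪ls - lam (k+1), A (v (k+1)) - b⟫
              = θ k * ⟪ls - lam (k+1), lam (k+1) - lam k⟫ := by
            rw [hAv, inner_smul_right]
            field_simp
          have e2 : α k * ⟪ls - lam (k+1), A (v (k+1)) - b⟫
              = α k * ⟪ls, A (v (k+1)) - b⟫ - α k * ⟪lam (k+1), A (v (k+1)) - b⟫ := by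
            rw [inner_sub_left]; ring
          have hpol' := congrArg (fun r => θ k/2 * r) hpol
          have hnn : 0 ≤ θ k/2*‖lam (k+1) - lam k‖^2 :=
            mul_nonneg (by linarith only [hth]) (by positivity)
          have r1 : θ k/2*‖ls - lam k‖^2 = θ k/2*‖lam k - ls‖^2 := by rw [norm_sub_rev]
          have r2 : θ k/2*‖ls - lam (k+1)‖^2 = θ k/2*‖lam (k+1) - ls‖^2 := by
            rw [norm_sub_rev]
          nlinarith only [e1, e2, hpol', hnn, r1, r2]
        -- multiplier recursion in the Lagrangian term
        have F10 : (1+α k) * ⟪ls, A (x (k+1)) - b⟫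
            = ⟪ls, A (x k) - b⟫ + α k * ⟪ls, A (v (k+1)) - b⟫ := by
          have e3 : (1+α k) • (A (x (k+1)) - b) = (A (x k) - b) + α k • (A (v (k+1)) - b) := by
            rw [smul_sub, ← map_smul, hx k, map_add, map_smul, smul_sub]
            module
          have e4 := congrArg (fun z => (⟪ls, z⟫ : ℝ)) e3
          simpa only [inner_add_right, inner_smul_right] using e4
        -- expansions of the energies
        have EE1 : Ef (k+1) = hβf (x (k+1)) + g (x (k+1)) + ⟪ls, A (x (k+1)) - b⟫
            - (h xs + g xs)
            + γ (k+1)/2*‖v (k+1) - xs‖^2 + θ (k+1)/2*‖lam (k+1) - ls‖^2 := by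
          rw [hEf, hLβ', hLβxs]; try ring
        have EE0 : Ef k = hβf (x k) + g (x k) + ⟪ls, A (x k) - b⟫ - (h xs + g xs)
            + γ k/2*‖v k - xs‖^2 + θ k/2*‖lam k - ls‖^2 := by
          rw [hEf, hLβ', hLβxs]; try ring
        have eγZ : (1+α k)*(γ (k+1)/2*‖v (k+1) - xs‖^2)
            = (γ k + μβ*α k)/2*‖v (k+1) - xs‖^2 := by
          rw [hγ k]; field_simp; try ring
        have eθZ : (1+α k)*(θ (k+1)/2*‖lam (k+1) - ls‖^2)
            = θ k/2*‖lam (k+1) - ls‖^2 := by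
          rw [hθ k]; field_simp; try ring
        have n1 : (γ k + μβ*α k)/2*‖xs - v (k+1)‖^2
            = (γ k + μβ*α k)/2*‖v (k+1) - xs‖^2 := by rw [norm_sub_rev]
        have n2 : γ k*‖xs - v k‖^2 = γ k*‖v k - xs‖^2 := by rw [norm_sub_rev]
        have nn1 : 0 ≤ (μβ*α k)*‖v (k+1) - y k‖^2 := mul_nonneg hs0 (by positivity)
        rw [EE1, EE0]
        nlinarith only [F1, S3, F3, F4, F5, F6, F7, F8, F9, F10, eγZ, eθZ, n1, n2, nn1,
          ha, hgm]
      have hfeas : A (x (k+1)) - b = θ (k+1) • ((A (x 0) - b) + (lam (k+1) - lam 0)) := by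
        have hθne : θ k ≠ 0 := (hθpos k).ne'
        have e1 : (1+α k) • (A (x (k+1))) = A (x k) + α k • A (v (k+1)) := by
          rw [← map_smul, hx k, map_add, map_smul]
        have e2 : θ k • (lam (k+1) - lam k) = α k • (A (v (k+1)) - b) := by
          rw [hlam k, add_sub_cancel_left, smul_smul]
          congr 1
          field_simp
        have e3 : (1+α k) • (A (x (k+1)) - b)
            = (A (x k) - b) + α k • (A (v (k+1)) - b) := by
          rw [smul_sub, e1, smul_sub]
          module
        have hθ1 : θ k = (1+α k)*θ (k+1) := by rw [hθ k]; field_simp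
        refine smul_right_injective _ (ne_of_gt h1a) ?_
        show (1+α k) • (A (x (k+1)) - b)
            = (1+α k) • (θ (k+1) • ((A (x 0) - b) + (lam (k+1) - lam 0)))
        rw [e3, hfk, ← e2, smul_smul, ← hθ1, ← smul_add]
        congr 1
        abel
      refine ⟨⟨hxk1, hvk1⟩, ?_, hfeas⟩
      have hθ1 : (1 + α k) * θ (k+1) = θ k := by
        rw [hθ k]; field_simp
      have : (1 + α k) * Ef (k+1) ≤ (1 + α k) * (θ (k+1) * Ef 0) := by
        rw [← mul_assoc, hθ1]; linarith only [onestep, hEk]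
      exact le_of_mul_le_mul_left (by linarith) h1a
  -- E_0 and component bounds
  have hLβlow : ∀ k, x k ∈ X → h xs + g xs ≤ Lβ (x k) ls := by
    intro k hxk
    rw [hLβ]
    have := hsaddle (x k) hxk
    have h2 : 0 ≤ β/2*‖A (x k) - b‖^2 := by positivity
    linarith
  have hcomp : ∀ k, Lβ (x k) ls - Lβ xs (lam k) + θ k / 2 * ‖lam k - ls‖ ^ 2 ≤ Ef k
      ∧ Lβ (x k) ls - Lβ xs (lam k) ≤ Ef k ∧ 0 ≤ Ef k := by
    intro k
    have h1 : 0 ≤ γ k / 2 * ‖v k - xs‖ ^ 2 :=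
      mul_nonneg (div_nonneg (hγpos k).le (by norm_num)) (by positivity)
    have h2 : 0 ≤ θ k / 2 * ‖lam k - ls‖ ^ 2 :=
      mul_nonneg (div_nonneg (hθpos k).le (by norm_num)) (by positivity)
    have h3 : 0 ≤ Lβ (x k) ls - Lβ xs (lam k) := by
      rw [hLβxs]
      linarith only [hLβlow k (key k).1.1]
    rw [hEf k]
    refine ⟨by linarith only [h1], by linarith only [h1, h2], by linarith only [h1, h2, h3]⟩
  have hEf0 : 0 ≤ Ef 0 := (hcomp 0).2.2
  have hR0 : 0 ≤ R₀ := by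
    rw [hR₀]
    have n1 := Real.sqrt_nonneg (2*Ef 0)
    have n2 := norm_nonneg (lam 0 - ls)
    have n3 := norm_nonneg (A (x 0) - b)
    linarith only [n1, n2, n3]
  -- feasibility bound
  have hfeas : ∀ k, ‖A (x k) - b‖ ≤ θ k * R₀ := by
    intro k
    rw [(key k).2.2, norm_smul, Real.norm_eq_abs, abs_of_pos (hθpos k)]
    refine mul_le_mul_of_nonneg_left ?_ (hθpos k).le
    have etri : A (x 0) - b + (lam k - lam 0) = (lam k - ls) + ((ls - lam 0) + (A (x 0) - b)) := by
      abel
    have hlamb : ‖lam k - ls‖ ≤ Real.sqrt (2 * Ef 0) := by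
      have hc := (hcomp k).1
      have h3 : 0 ≤ Lβ (x k) ls - Lβ xs (lam k) := by
        rw [hLβxs]
        linarith only [hLβlow k (key k).1.1]
      have hEk := (key k).2.1
      have hsq : ‖lam k - ls‖^2 ≤ 2 * Ef 0 := by
        have hθk := hθpos k
        nlinarith only [hc, h3, hEk, hθk]
      have h2E : Real.sqrt (2*Ef 0)^2 = 2*Ef 0 :=
        Real.sq_sqrt (by linarith only [hEf0])
      nlinarith only [hsq, h2E, norm_nonneg (lam k - ls), Real.sqrt_nonneg (2*Ef 0)]
    calc ‖A (x 0) - b + (lam k - lam 0)‖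
        ≤ ‖lam k - ls‖ + ‖(ls - lam 0) + (A (x 0) - b)‖ := by
          rw [etri]; exact norm_add_le _ _
      _ ≤ ‖lam k - ls‖ + (‖ls - lam 0‖ + ‖A (x 0) - b‖) := by
          linarith only [norm_add_le (ls - lam 0) (A (x 0) - b)]
      _ ≤ R₀ := by
          rw [hR₀, norm_sub_rev ls (lam 0)]
          linarith only [hlamb]
  intro k
  have hxk : x k ∈ X := (key k).1.1
  have hEk : Ef k ≤ θ k * Ef 0 := (key k).2.1
  have hLagxs : Lag xs (lam k) = h xs + g xs := by
    rw [hLag, hKKT1]; simp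
  have hLag1 : 0 ≤ Lag (x k) ls - Lag xs (lam k) := by
    rw [hLagxs, hLag]
    linarith only [hsaddle (x k) hxk]
  have hLag2 : Lag (x k) ls - Lag xs (lam k) ≤ θ k * Ef 0 := by
    have h1 := (hcomp k).2.1
    have h2 : Lag (x k) ls ≤ Lβ (x k) ls := by
      rw [hLag, hLβ]
      have : 0 ≤ β/2*‖A (x k) - b‖^2 := by positivity
      linarith only [this]
    rw [hLagxs]
    rw [hLβxs] at h1
    have hEk' := (key k).2.1
    linarith only [h1, h2, hEk']
  refine ⟨hfeas k, ⟨hLag1, hLag2⟩, ?_⟩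
  -- objective bound
  have hinner : |⟪ls, A (x k) - b⟫| ≤ ‖ls‖ * (θ k * R₀) := by
    calc |⟪ls, A (x k) - b⟫| ≤ ‖ls‖ * ‖A (x k) - b‖ := abs_real_inner_le_norm _ _
      _ ≤ ‖ls‖ * (θ k * R₀) := by
        exact mul_le_mul_of_nonneg_left (hfeas k) (norm_nonneg ls)
  have hid : (h (x k) + g (x k)) - (h xs + g xs)
      = (Lag (x k) ls - Lag xs (lam k)) - ⟪ls, A (x k) - b⟫ := by
    rw [hLag, hLagxs]; ring
  rw [hid]
  rw [abs_le]
  have habs := abs_le.1 hinner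
  have hθk0 : 0 ≤ θ k * Ef 0 := mul_nonneg (hθpos k).le hEf0
  have e : θ k * (Ef 0 + R₀ * ‖ls‖) = θ k * Ef 0 + ‖ls‖ * (θ k * R₀) := by ring
  constructor
  · linarith only [habs.2, hLag1, hθk0, e]
  · linarith only [habs.1, hLag2, hθk0, e]
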